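/- Let T ≥ 1 and d ≥ 1 be integers, 0 ≤ ε ≤ 1/T, and 0 ≤ δ ≤ 1/2. Let A be a map assigning to each sequence D of T loss functions in {ℓ : {1,…,d} → {0,1}} a probability distribution A(D) over output sequences (z_1,…,z_T) ∈ {1,…,d}^T, and suppose A is (ε,δ)-differentially private: for any two input sequences differing in exactly one coordinate and every set O of output sequences, Pr[A(D) ∈ O] ≤ e^{ε}·Pr[A(D') ∈ O] + δ. Draw ℓ uniformly at random from {0,1}^{d} (each coordinate an independent Bernoulli(1/2)), let D_ℓ = (ℓ, ℓ, …, ℓ) be the constant sequence, and let (z_1,…,z_T) ∼ A(D_ℓ). Then E[ Σ_{t=1}^{T} ℓ(z_t) ] ≥ T·(1/2 − T·ε/2) − T²·d·δ/2, where the expectation is over both ℓ and the randomness of A. -/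

import Mathlib

open MeasureTheory Finset

lemma dpaux_exp_bound (x : ℝ) (hx : 0 ≤ x) : (1 - x) * (1 + Real.exp x) ≤ 2 := by
  have h0 : 1 - x ≤ Real.exp (-x) := by linarith [Real.add_one_le_exp (-x)]
  have h1 : (1 - x) * Real.exp x ≤ Real.exp (-x) * Real.exp x :=
    mul_le_mul_of_nonneg_right h0 (Real.exp_pos x).le
  rw [← Real.exp_add, neg_add_cancel, Real.exp_zero] at h1
  nlinarith

lemma dpaux_meas_finset {α : Type*} [MeasurableSpace α] [MeasurableSingletonClass α]
    (μ : Measure α) (s : Finset α) : μ ↑s = ∑ x ∈ s, μ {x} := by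
  have h := measure_biUnion_finset (μ := μ) (s := s) (f := fun x => ({x} : Set α))
    (fun x _ y _ hxy => by simp [Set.disjoint_singleton, hxy])
    (fun b _ => measurableSet_singleton b)
  rw [← h]
  congr 1
  ext x
  simp

theorem dp_experts_epoch_lower_bound (T d : ℕ) (hT : 1 ≤ T) (hd : 1 ≤ d)
    (ε δ : ℝ) (hε : 0 ≤ ε) (hε' : ε ≤ 1 / T) (hδ : 0 ≤ δ) (hδ' : δ ≤ 1 / 2)
    (A : (Fin T → (Fin d → Bool)) → Measure (Fin T → Fin d))
    (hprob : ∀ D, IsProbabilityMeasure (A D))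
    (hDP : ∀ D D' : Fin T → (Fin d → Bool),
      (Finset.univ.filter fun i => D i ≠ D' i).card = 1 →
      ∀ O : Set (Fin T → Fin d), MeasurableSet O →
        A D O ≤ ENNReal.ofReal (Real.exp ε) * A D' O + ENNReal.ofReal δ) :
    (∑ ℓ : Fin d → Bool,
        ∫ z : Fin T → Fin d,
          (∑ t : Fin T, if ℓ (z t) then (1 : ℝ) else 0) ∂(A fun _ => ℓ)) / 2 ^ d ≥
      T * (1 / 2 - T * ε / 2) - T ^ 2 * d * δ / 2 := by
  classical
  have hmeas : ∀ O : Set (Fin T → Fin d), MeasurableSet O :=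
    fun O => (Set.toFinite O).measurableSet
  -- real-valued DP step
  have hDPr : ∀ D D' : Fin T → (Fin d → Bool),
      (Finset.univ.filter fun i => D i ≠ D' i).card = 1 →
      ∀ O : Set (Fin T → Fin d),
        ((A D) O).toReal ≤ Real.exp ε * ((A D') O).toReal + δ := by
    intro D D' hcard O
    have h := hDP D D' hcard O (hmeas O)
    have h1 : (A D') O ≠ ⊤ := measure_ne_top _ _
    have hmul : ENNReal.ofReal (Real.exp ε) * A D' O ≠ ⊤ :=
      ENNReal.mul_ne_top ENNReal.ofReal_ne_top h1
    have h2 : ((A D) O).toReal ≤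
        (ENNReal.ofReal (Real.exp ε) * A D' O + ENNReal.ofReal δ).toReal :=
      ENNReal.toReal_mono (ENNReal.add_ne_top.mpr ⟨hmul, ENNReal.ofReal_ne_top⟩) h
    rwa [ENNReal.toReal_add hmul ENNReal.ofReal_ne_top, ENNReal.toReal_mul,
      ENNReal.toReal_ofReal (Real.exp_pos ε).le, ENNReal.toReal_ofReal hδ] at h2
  -- group privacy
  have GP : ∀ ℓ ℓ' : Fin d → Bool, ℓ ≠ ℓ' → ∀ O : Set (Fin T → Fin d),
      ((A fun _ => ℓ) O).toReal ≤
        Real.exp (T * ε) * (((A fun _ => ℓ') O).toReal + T * δ) := by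
    intro ℓ ℓ' hne O
    set E : ℕ → Fin T → (Fin d → Bool) := fun k i => if (i : ℕ) < k then ℓ' else ℓ with hE
    have key : ∀ k, k ≤ T →
        ((A (E 0)) O).toReal ≤ Real.exp (k * ε) * (((A (E k)) O).toReal + k * δ) := by
      intro k
      induction k with
      | zero => intro _; simp
      | succ k ih =>
        intro hk1
        have hk : k < T := hk1
        have ihh := ih (le_of_lt hk)
        have hcard : (Finset.univ.filter fun i : Fin T => E k i ≠ E (k+1) i).card = 1 := by
          have hfe : (Finset.univ.filter fun i : Fin T => E k i ≠ E (k+1) i)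
              = {(⟨k, hk⟩ : Fin T)} := by
            ext i
            simp only [Finset.mem_filter, Finset.mem_univ, true_and, Finset.mem_singleton, hE,
              Fin.ext_iff, Fin.val_mk]
            by_cases h1 : (i : ℕ) < k
            · rw [if_pos h1, if_pos (show (i : ℕ) < k + 1 by omega)]
              simp only [ne_eq, not_true_eq_false, false_iff]
              omega
            · by_cases h2 : (i : ℕ) < k + 1
              · rw [if_neg h1, if_pos h2]
                have hik : (i : ℕ) = k := by omega
                simp [hik, hne]
              · rw [if_neg h1, if_neg h2]
                simp only [ne_eq, not_true_eq_false, false_iff]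
                omega
          rw [hfe, Finset.card_singleton]
        have hstep := hDPr (E k) (E (k + 1)) hcard O
        have hexp_pos : (0:ℝ) < Real.exp ((k:ℝ) * ε) := Real.exp_pos _
        have hexp1 : (1:ℝ) ≤ Real.exp ε := Real.one_le_exp hε
        have hsplit : Real.exp (((k:ℕ)+1 : ℕ) * ε) = Real.exp ((k:ℝ) * ε) * Real.exp ε := by
          rw [← Real.exp_add]
          congr 1
          push_cast
          ring
        have hnn : (0:ℝ) ≤ ((A (E (k+1))) O).toReal := ENNReal.toReal_nonneg
        have hknn : (0:ℝ) ≤ (k:ℝ) := Nat.cast_nonneg k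
        calc ((A (E 0)) O).toReal ≤ Real.exp ((k:ℝ) * ε) * (((A (E k)) O).toReal + k * δ) := ihh
          _ ≤ Real.exp ((k:ℝ) * ε) *
              ((Real.exp ε * ((A (E (k+1))) O).toReal + δ) + k * δ) := by
              apply mul_le_mul_of_nonneg_left _ hexp_pos.le
              linarith
          _ ≤ Real.exp (((k:ℕ)+1 : ℕ) * ε) * (((A (E (k+1))) O).toReal + ((k:ℕ)+1 : ℕ) * δ) := by
              rw [hsplit]
              push_cast
              nlinarith [mul_nonneg hknn hδ, mul_nonneg (mul_nonneg hexp_pos.le hknn) hδ,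
                mul_nonneg hexp_pos.le hδ]
    have e0 : E 0 = fun _ => ℓ := funext fun i => by simp [hE]
    have eT : E T = fun _ => ℓ' := funext fun i => by simp [hE, i.isLt]
    have h := key T le_rfl
    rwa [e0, eT] at h
  -- pointwise probabilities
  set p : (Fin d → Bool) → Fin T → Fin d → ℝ :=
    fun ℓ t j => ((A fun _ => ℓ) {z | z t = j}).toReal with hp
  have hp0 : ∀ ℓ t j, 0 ≤ p ℓ t j := fun _ _ _ => ENNReal.toReal_nonneg
  have hpsum : ∀ ℓ t j, p ℓ t j =
      ∑ z ∈ Finset.univ.filter (fun z : Fin T → Fin d => z t = j),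
        ((A fun _ => ℓ) {z}).toReal := by
    intro ℓ t j
    have hset : {z : Fin T → Fin d | z t = j}
        = ↑(Finset.univ.filter (fun z : Fin T → Fin d => z t = j)) := by
      ext z; simp
    show ((A fun _ => ℓ) {z | z t = j}).toReal = _
    rw [hset, dpaux_meas_finset, ENNReal.toReal_sum (fun z _ => measure_ne_top _ _)]
  have hztot : ∀ ℓ : Fin d → Bool,
      ∑ z : Fin T → Fin d, ((A fun _ => ℓ) {z}).toReal = 1 := by
    intro ℓ
    have := hprob (fun _ => ℓ)
    rw [← ENNReal.toReal_sum (fun z _ => measure_ne_top _ _), ← dpaux_meas_finset,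
      Finset.coe_univ, measure_univ, ENNReal.toReal_one]
  have hpone : ∀ (ℓ : Fin d → Bool) (t : Fin T), ∑ j : Fin d, p ℓ t j = 1 := by
    intro ℓ t
    calc ∑ j : Fin d, p ℓ t j
        = ∑ j : Fin d, ∑ z ∈ Finset.univ.filter (fun z : Fin T → Fin d => z t = j),
            ((A fun _ => ℓ) {z}).toReal := Finset.sum_congr rfl (fun j _ => hpsum ℓ t j)
      _ = ∑ z : Fin T → Fin d, ((A fun _ => ℓ) {z}).toReal := by
          rw [← Finset.sum_fiberwise Finset.univ (fun z : Fin T → Fin d => z t)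
            (fun z => ((A fun _ => ℓ) {z}).toReal)]
      _ = 1 := hztot ℓ
  -- the flip bijection
  set flip : Fin d → (Fin d → Bool) → (Fin d → Bool) :=
    fun j ℓ => Function.update ℓ j (!ℓ j) with hflip
  have hflipj : ∀ (j : Fin d) (ℓ : Fin d → Bool), flip j ℓ j = !ℓ j :=
    fun j ℓ => Function.update_self j _ ℓ
  have hflipne : ∀ (j : Fin d) (i : Fin d) (ℓ : Fin d → Bool), i ≠ j → flip j ℓ i = ℓ i :=
    fun j i ℓ h => Function.update_of_ne h _ ℓ
  have hinv : ∀ j, Function.Involutive (flip j) := by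
    intro j ℓ
    funext i
    rcases eq_or_ne i j with h | h
    · subst h
      rw [hflipj, hflipj, Bool.not_not]
    · rw [hflipne j i _ h, hflipne j i _ h]
  have hreindex : ∀ (j : Fin d) (f : (Fin d → Bool) → ℝ),
      ∑ ℓ : Fin d → Bool, f (flip j ℓ) = ∑ ℓ : Fin d → Bool, f ℓ :=
    fun j f => Fintype.sum_bijective (flip j) (hinv j).bijective _ _ (fun ℓ => rfl)
  have hGPp : ∀ (ℓ : Fin d → Bool) (t : Fin T) (j : Fin d),
      p (flip j ℓ) t j ≤ Real.exp (T * ε) * (p ℓ t j + T * δ) := by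
    intro ℓ t j
    have hne : flip j ℓ ≠ ℓ := by
      intro h
      have h2 := congrFun h j
      rw [hflipj] at h2
      exact absurd h2 (by cases hb : ℓ j <;> simp [hb])
    exact GP (flip j ℓ) ℓ hne {z | z t = j}
  have hcard2 : ∑ ℓ : Fin d → Bool, (1:ℝ) = 2 ^ d := by
    rw [Finset.sum_const, Finset.card_univ, Fintype.card_fun, Fintype.card_bool,
      Fintype.card_fin, nsmul_eq_mul, mul_one]
    push_cast
    ring
  have hcount : ∀ j : Fin d, ∑ ℓ : Fin d → Bool, (if ℓ j then (1:ℝ) else 0) = 2 ^ d / 2 := by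
    intro j
    have h1 : ∑ ℓ : Fin d → Bool, (if ℓ j then (0:ℝ) else 1)
        = ∑ ℓ : Fin d → Bool, (if ℓ j then (1:ℝ) else 0) := by
      calc ∑ ℓ : Fin d → Bool, (if ℓ j then (0:ℝ) else 1)
          = ∑ ℓ : Fin d → Bool, (if (flip j ℓ) j then (1:ℝ) else 0) :=
            Finset.sum_congr rfl (fun ℓ _ => by rw [hflipj]; cases hb : ℓ j <;> simp [hb])
        _ = ∑ ℓ : Fin d → Bool, (if ℓ j then (1:ℝ) else 0) :=
            hreindex j (fun ℓ => if ℓ j then (1:ℝ) else 0)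
    have h3 : (∑ ℓ : Fin d → Bool, (if ℓ j then (1:ℝ) else 0))
        + ∑ ℓ : Fin d → Bool, (if ℓ j then (0:ℝ) else 1) = 2 ^ d := by
      rw [← Finset.sum_add_distrib, ← hcard2]
      exact Finset.sum_congr rfl (fun ℓ _ => by split <;> simp)
    linarith
  have hS0eq : ∀ (t : Fin T) (j : Fin d),
      ∑ ℓ : Fin d → Bool, (if ℓ j then (0:ℝ) else p ℓ t j)
        = ∑ ℓ : Fin d → Bool, (if ℓ j then p (flip j ℓ) t j else 0) := by
    intro t j
    calc ∑ ℓ : Fin d → Bool, (if ℓ j then (0:ℝ) else p ℓ t j)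
        = ∑ ℓ : Fin d → Bool, (if (flip j ℓ) j then (0:ℝ) else p (flip j ℓ) t j) :=
          (hreindex j (fun ℓ => if ℓ j then (0:ℝ) else p ℓ t j)).symm
      _ = ∑ ℓ : Fin d → Bool, (if ℓ j then p (flip j ℓ) t j else 0) :=
          Finset.sum_congr rfl (fun ℓ _ => by rw [hflipj]; cases hb : ℓ j <;> simp [hb])
  -- per-round lower bound
  have hP : (0:ℝ) < 2 ^ d := by positivity
  have hper : ∀ t : Fin T, (2:ℝ) ^ d * (1/2 - T * ε / 2 - T * d * δ / 2)
      ≤ ∑ j : Fin d, ∑ ℓ : Fin d → Bool, (if ℓ j then p ℓ t j else 0) := by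
    intro t
    set S1 := ∑ j : Fin d, ∑ ℓ : Fin d → Bool, (if ℓ j then p ℓ t j else 0) with hS1def
    set S0 := ∑ j : Fin d, ∑ ℓ : Fin d → Bool, (if ℓ j then (0:ℝ) else p ℓ t j) with hS0def
    set eT := Real.exp (T * ε) with heTdef
    have heT1 : (1:ℝ) ≤ eT := Real.one_le_exp (mul_nonneg (Nat.cast_nonneg T) hε)
    have hsum10 : S1 + S0 = 2 ^ d := by
      rw [hS1def, hS0def, ← Finset.sum_add_distrib]
      have hjj : ∀ j : Fin d, ((∑ ℓ : Fin d → Bool, (if ℓ j then p ℓ t j else 0))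
          + ∑ ℓ : Fin d → Bool, (if ℓ j then (0:ℝ) else p ℓ t j))
          = ∑ ℓ : Fin d → Bool, p ℓ t j := by
        intro j
        rw [← Finset.sum_add_distrib]
        exact Finset.sum_congr rfl (fun ℓ _ => by split <;> simp)
      rw [Finset.sum_congr rfl (fun j _ => hjj j), Finset.sum_comm,
        Finset.sum_congr rfl (fun ℓ _ => hpone ℓ t), hcard2]
    have hS0le : S0 ≤ eT * S1 + eT * (T * δ) * (d * (2 ^ d / 2)) := by
      rw [hS0def]
      calc ∑ j : Fin d, ∑ ℓ : Fin d → Bool, (if ℓ j then (0:ℝ) else p ℓ t j)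
          = ∑ j : Fin d, ∑ ℓ : Fin d → Bool, (if ℓ j then p (flip j ℓ) t j else 0) :=
            Finset.sum_congr rfl (fun j _ => hS0eq t j)
        _ ≤ ∑ j : Fin d, ∑ ℓ : Fin d → Bool, (if ℓ j then eT * (p ℓ t j + T * δ) else 0) := by
            refine Finset.sum_le_sum (fun j _ => Finset.sum_le_sum (fun ℓ _ => ?_))
            split
            · exact hGPp ℓ t j
            · exact le_refl 0
        _ = ∑ j : Fin d, ∑ ℓ : Fin d → Bool,
              (eT * (if ℓ j then p ℓ t j else 0) + eT * (T * δ) * (if ℓ j then (1:ℝ) else 0)) :=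
            Finset.sum_congr rfl (fun j _ => Finset.sum_congr rfl (fun ℓ _ => by split <;> ring))
        _ = eT * (∑ j : Fin d, ∑ ℓ : Fin d → Bool, (if ℓ j then p ℓ t j else 0))
              + eT * (T * δ) * (∑ j : Fin d, ∑ ℓ : Fin d → Bool, (if ℓ j then (1:ℝ) else 0)) := by
            simp only [Finset.sum_add_distrib, Finset.mul_sum]
        _ = eT * S1 + eT * (T * δ) * (d * (2 ^ d / 2)) := by
            rw [← hS1def, Finset.sum_congr rfl (fun j _ => hcount j), Finset.sum_const,
              Finset.card_univ, Fintype.card_fin, nsmul_eq_mul]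
    have hS1nn : (0:ℝ) ≤ S1 := by
      rw [hS1def]
      refine Finset.sum_nonneg (fun j _ => Finset.sum_nonneg (fun ℓ _ => ?_))
      split
      · exact hp0 ℓ t j
      · exact le_refl 0
    have hKnn : (0:ℝ) ≤ (T * δ) * ((d:ℝ) * (2 ^ d / 2)) := by positivity
    have hx := dpaux_exp_bound ((T:ℝ) * ε) (mul_nonneg (Nat.cast_nonneg T) hε)
    rw [← heTdef] at hx
    have h1 : (2:ℝ) ^ d * ((1 - (T:ℝ) * ε) * (1 + eT)) ≤ 2 ^ d * 2 :=
      mul_le_mul_of_nonneg_left hx hP.le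
    have h2 : ((2:ℝ) ^ d * (1/2 - T * ε / 2 - T * d * δ / 2)) * (1 + eT) ≤ S1 * (1 + eT) := by
      nlinarith [hS0le, hsum10, hKnn, heT1, hS1nn, h1]
    exact le_of_mul_le_mul_right h2 (by positivity : (0:ℝ) < 1 + eT)
  -- rewrite the left-hand side
  have hLHS : (∑ ℓ : Fin d → Bool,
        ∫ z : Fin T → Fin d,
          (∑ t : Fin T, if ℓ (z t) then (1 : ℝ) else 0) ∂(A fun _ => ℓ))
      = ∑ t : Fin T, ∑ j : Fin d, ∑ ℓ : Fin d → Bool, (if ℓ j then p ℓ t j else 0) := by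
    calc (∑ ℓ : Fin d → Bool,
          ∫ z : Fin T → Fin d,
            (∑ t : Fin T, if ℓ (z t) then (1 : ℝ) else 0) ∂(A fun _ => ℓ))
        = ∑ ℓ : Fin d → Bool, ∑ z : Fin T → Fin d,
            ((A fun _ => ℓ) {z}).toReal * (∑ t : Fin T, if ℓ (z t) then (1:ℝ) else 0) := by
          refine Finset.sum_congr rfl (fun ℓ _ => ?_)
          haveI := hprob (fun _ => ℓ)
          rw [integral_fintype _]
          simp [smul_eq_mul, Measure.real_def]
          exact Integrable.of_finite
      _ = ∑ ℓ : Fin d → Bool, ∑ t : Fin T, ∑ z : Fin T → Fin d,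
            ((A fun _ => ℓ) {z}).toReal * (if ℓ (z t) then (1:ℝ) else 0) := by
          refine Finset.sum_congr rfl (fun ℓ _ => ?_)
          rw [← Finset.sum_comm]
          exact Finset.sum_congr rfl (fun z _ => Finset.mul_sum _ _ _)
      _ = ∑ ℓ : Fin d → Bool, ∑ t : Fin T, ∑ j : Fin d, (if ℓ j then p ℓ t j else 0) := by
          refine Finset.sum_congr rfl (fun ℓ _ => Finset.sum_congr rfl (fun t _ => ?_))
          calc ∑ z : Fin T → Fin d,
                ((A fun _ => ℓ) {z}).toReal * (if ℓ (z t) then (1:ℝ) else 0)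
              = ∑ j : Fin d, ∑ z ∈ Finset.univ.filter (fun z : Fin T → Fin d => z t = j),
                  ((A fun _ => ℓ) {z}).toReal * (if ℓ (z t) then (1:ℝ) else 0) :=
                (Finset.sum_fiberwise Finset.univ (fun z : Fin T → Fin d => z t) _).symm
            _ = ∑ j : Fin d, (if ℓ j then p ℓ t j else 0) := by
                refine Finset.sum_congr rfl (fun j _ => ?_)
                calc ∑ z ∈ Finset.univ.filter (fun z : Fin T → Fin d => z t = j),
                      ((A fun _ => ℓ) {z}).toReal * (if ℓ (z t) then (1:ℝ) else 0)
                    = ∑ z ∈ Finset.univ.filter (fun z : Fin T → Fin d => z t = j),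
                      (if ℓ j then ((A fun _ => ℓ) {z}).toReal else 0) := by
                      refine Finset.sum_congr rfl (fun z hz => ?_)
                      have hzt : z t = j := (Finset.mem_filter.mp hz).2
                      rw [hzt]
                      split <;> ring
                  _ = (if ℓ j then ∑ z ∈ Finset.univ.filter (fun z : Fin T → Fin d => z t = j),
                      ((A fun _ => ℓ) {z}).toReal else 0) := by
                      split <;> simp
                  _ = (if ℓ j then p ℓ t j else 0) := by rw [← hpsum ℓ t j]
      _ = ∑ t : Fin T, ∑ j : Fin d, ∑ ℓ : Fin d → Bool, (if ℓ j then p ℓ t j else 0) := by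
          rw [Finset.sum_comm]
          exact Finset.sum_congr rfl (fun t _ => Finset.sum_comm)
  rw [ge_iff_le, le_div_iff₀ hP, hLHS]
  calc ((T:ℝ) * (1 / 2 - T * ε / 2) - T ^ 2 * d * δ / 2) * 2 ^ d
      = ∑ _t : Fin T, (2:ℝ) ^ d * (1/2 - T * ε / 2 - T * d * δ / 2) := by
        rw [Finset.sum_const, Finset.card_univ, Fintype.card_fin, nsmul_eq_mul]
        ring
    _ ≤ ∑ t : Fin T, ∑ j : Fin d, ∑ ℓ : Fin d → Bool, (if ℓ j then p ℓ t j else 0) :=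
        Finset.sum_le_sum (fun t _ => hper t)
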